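/- For 1 ≤ d ≤ n-4, every Schröder path in an n×n grid with d diagonal steps, area 1, and ending in NE belongs to exactly one of the two sets: the 'upper' set of paths of the form D^j NNEE γ' NE NE or γ' NE D^j NNEE γ'', and the 'lower' set of paths of the form D^j NNEE γ' D NE or γ' NDE D^j NE γ'' (with γ', γ'' ∈ {NE,D}^*, j ≥ 0); i.e., these two sets are disjoint and their union is the whole set. -/

import Mathlib

open scoped Classical

inductive Step : Type
  | N | E | D
deriving DecidableEq, Repr

instance : Fintype Step :=
  ⟨{Step.N, Step.E, Step.D}, by intro x; cases x <;> simp⟩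

open Step

/-- number of occurrences of the letter `s` in the word `w` -/
def cnt (s : Step) (w : List Step) : ℕ := w.count s

/-- Schröder (or Dyck, if no `D`s) path in an `n × n` grid: every prefix has at
least as many `N`s as `E`s, and the totals agree. -/
def IsSchroeder (w : List Step) : Prop :=
  (∀ p : List Step, p <+: w → cnt E p ≤ cnt N p) ∧ cnt N w = cnt E w

/-- words that are concatenations of blocks `NE` and `D` -/
inductive IsNED : List Step → Prop
  | nil : IsNED []
  | ne {w} : IsNED w → IsNED (N :: E :: w)
  | d {w} : IsNED w → IsNED (D :: w)

/-- area of a Schröder path: the number of lower triangles between the path and the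
main diagonal, computed as the sum over `N` and `D` steps of the height
`#N - #E` of the starting point of the step above the diagonal. -/
def areaAux : ℕ → List Step → ℕ
  | _, [] => 0
  | h, N :: w => h + areaAux (h+1) w
  | h, D :: w => h + areaAux h w
  | h, E :: w => areaAux (h-1) w

def area (w : List Step) : ℕ := areaAux 0 w

/-- area of an `N/E` lattice path in a rectangular grid: the number of boxes under
the path, i.e. the sum over `E` steps of the number of `N` steps before it. -/
def areaNEAux : ℕ → List Step → ℕ
  | _, [] => 0
  | h, N :: w => areaNEAux (h+1) w
  | h, E :: w => h + areaNEAux h w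
  | h, D :: w => areaNEAux h w

def areaNE (w : List Step) : ℕ := areaNEAux 0 w

/-- number of `N`s occurring before the `(j+1)`-st `E` (`j` is 0-indexed);
this is the height of the path above the horizontal interval `[j, j+1]`. -/
def nBefore : List Step → ℕ → ℕ
  | [], _ => 0
  | N :: w, j => 1 + nBefore w j
  | E :: w, j => if j = 0 then 0 else nBefore w (j-1)
  | D :: w, j => nBefore w j

/-- number of `E`s occurring before the `(i+1)`-st `N` (`i` is 0-indexed). -/
def eBefore : List Step → ℕ → ℕ
  | [], _ => 0
  | E :: w, i => 1 + eBefore w i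
  | N :: w, i => if i = 0 then 0 else eBefore w (i-1)
  | D :: w, i => eBefore w i

/-- number of `D`s occurring after the `e`-th `E` (`e` is 1-indexed). -/
def dAfterE : List Step → ℕ → ℕ
  | [], _ => 0
  | E :: w, e => if e ≤ 1 then cnt D w else dAfterE w (e-1)
  | D :: w, e => dAfterE w e
  | N :: w, e => dAfterE w e

/-- Combined computation of `bounce(Γ(γ)) + numph(γ)` along the bounce path of
`Γ(γ)`.  Here `g` is the Schröder path, `w = Γ(g)` is the underlying Dyck path,
`nn` its size; the bounce path has corners (peaks) at the positions
`j₀ = 0, jₖ₊₁ = nBefore w jₖ`; each intermediate return `jₖ₊₁ < nn` contributes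
`nn - jₖ₊₁` to the bounce of `Γ(g)`, and the peak with corner at `jₖ` is the start
of the `(jₖ+1)`-st east step, contributing to numph the number of diagonal steps of
`g` above it, i.e. after that east step. -/
def bounceAux (g w : List Step) (nn : ℕ) : ℕ → ℕ → ℕ
  | 0, _ => 0
  | fuel+1, j =>
      dAfterE g (j+1) +
        (if nn ≤ nBefore w j ∨ nBefore w j ≤ j then 0
         else (nn - nBefore w j) + bounceAux g w nn fuel (nBefore w j))

/-- the bounce statistic of a Schröder path: `bounce(Γ(γ)) + numph(γ)` -/
def bounce (g : List Step) : ℕ :=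
  let w := g.filter (fun s => s ≠ D)
  let nn := cnt E w
  if nn = 0 then 0 else bounceAux g w nn g.length 0

/-- the (signed) area coordinate `a_i = m·i - (#E before the (i+1)-st N)` of line `i`
(0-indexed) for a path in an `n × mn` grid. -/
def aLine (m : ℕ) (g : List Step) (i : ℕ) : ℤ := (m : ℤ) * i - eBefore g i

/-- an `(n, mn)`-Dyck path: `n` north steps, `mn` east steps, no diagonal steps,
staying weakly above the main diagonal. -/
def IsParkingPath (n m : ℕ) (g : List Step) : Prop :=
  (∀ s ∈ g, s ≠ D) ∧ cnt N g = n ∧ cnt E g = m * n ∧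
    ∀ p : List Step, p <+: g → cnt E p ≤ m * cnt N p

/-- an `(n, mn)`-parking function: an `(n,mn)`-Dyck path labelled by a permutation
`w` of `{0, …, n-1}` whose labels increase within each column. -/
def IsParking (n m : ℕ) (g : List Step) (w : Fin n → Fin n) : Prop :=
  IsParkingPath n m g ∧ Function.Bijective w ∧
    ∀ i j : Fin n, (j : ℕ) = (i : ℕ) + 1 → eBefore g (i : ℕ) = eBefore g (j : ℕ) → w i < w j

/-- the diagonal inversion statistic of an `(n, mn)`-parking function -/
def dinv (n m : ℕ) (g : List Step) (w : Fin n → Fin n) : ℤ :=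
  ∑ i : Fin n, ∑ j : Fin n,
    if (i : ℕ) < (j : ℕ) then
      (if w i < w j then max 0 ((m : ℤ) - |aLine m g (i : ℕ) - aLine m g (j : ℕ)|) else 0) +
        (if w j < w i then max 0 ((m : ℤ) - |aLine m g (j : ℕ) - aLine m g (i : ℕ) + 1|) else 0)
    else 0

/-- the number of descents of the word `w` -/
def desNum (n : ℕ) (w : Fin n → Fin n) : ℕ :=
  ((Finset.range (n-1)).filter fun i =>
    ∃ hj : i + 1 < n, w ⟨i+1, hj⟩ < w ⟨i, Nat.lt_of_succ_lt hj⟩).card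

/-- the major index of the word `w` (with positions 1-indexed as usual) -/
def majStat (n : ℕ) (w : Fin n → Fin n) : ℕ :=
  ∑ i ∈ (Finset.range (n-1)).filter (fun i =>
    ∃ hj : i + 1 < n, w ⟨i+1, hj⟩ < w ⟨i, Nat.lt_of_succ_lt hj⟩), (i+1)

/-- the reading word of a labelled path in an `n × mn` grid: labels are read along
diagonals parallel to the main diagonal, starting with the farthest diagonal,
each diagonal being read from top-right to bottom-left. -/
def readWord (n m : ℕ) (g : List Step) (lab : ℕ → ℕ) : List ℕ :=
  ((List.range (m * n + 1)).map fun k =>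
    (((List.range n).reverse.filter fun i => aLine m g i = (m * n : ℤ) - k).map lab)).flatten

/-- the labelling function `ℕ → ℕ` associated to a permutation of `Fin n` -/
def labOf {n : ℕ} (w : Fin n → Fin n) : ℕ → ℕ :=
  fun i => if h : i < n then (w ⟨i, h⟩ : ℕ) else 0

/-- one step of the algorithm `φ`, on the reversed word: find the rightmost
(i.e. first in the reversed word) east step not followed by an east step,
and swap it with the letter following it. -/
def phiRevAux : List Step → List Step
  | a :: E :: t => if a ≠ E then E :: a :: t else a :: phiRevAux (E :: t)
  | a :: t => a :: phiRevAux t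
  | [] => []

/-- one step of the algorithm `φ` -/
def phiStep (w : List Step) : List Step := (phiRevAux w.reverse).reverse

/-- the sequence `φ(γ) = (γ₀, γ₁, …, γ_{bounce γ})` produced by the algorithm -/
def phiSeq (g : List Step) : List (List Step) :=
  (List.range (bounce g + 1)).map fun i => phiStep^[i] g

/-- the union of all sequences `φ(γ)` over area-0 Schröder paths with `n` blocks -/
def phiUniv (n : ℕ) : Set (List Step) :=
  {p | ∃ g, IsNED g ∧ cnt N g + cnt D g = n ∧ p ∈ phiSeq g}

/-- the map replacing each block `NE` by `N` and each `D` by `E` -/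
def theta : List Step → List Step
  | N :: E :: w => N :: theta w
  | D :: w => E :: theta w
  | _ :: w => theta w
  | [] => []

/-- the cells of the hook-shaped Young diagram `(d, 1^{n-d})` (row 0 is the arm). -/
def hookCells (n d : ℕ) : Finset (ℕ × ℕ) :=
  ((Finset.range d).image fun c => ((0 : ℕ), c)) ∪
    ((Finset.range (n - d + 1)).image fun r => (r, (0 : ℕ)))

/-- a standard Young tableau of hook shape `(d, 1^{n-d})`: `pos i` is the cell
`(row, column)` containing the entry `i+1`; entries increase along rows and columns. -/
structure HookSYT (n d : ℕ) where
  pos : Fin n → ℕ × ℕ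
  mem : ∀ i, pos i ∈ hookCells n d
  inj : Function.Injective pos
  rowInc : ∀ i j : Fin n, (pos i).1 = (pos j).1 → (pos i).2 < (pos j).2 → i < j
  colInc : ∀ i j : Fin n, (pos i).2 = (pos j).2 → (pos i).1 < (pos j).1 → i < j

/-- the descent set of a standard Young tableau: entries `i ∈ {1, …, n-1}` such that
the entry `i+1` lies in a strictly higher row than `i`. -/
def Des {n d : ℕ} (τ : HookSYT n d) : Finset ℕ :=
  (Finset.Icc 1 (n-1)).filter fun i =>
    ∃ hi : i < n, ∃ hi' : i - 1 < n, (τ.pos ⟨i - 1, hi'⟩).1 < (τ.pos ⟨i, hi⟩).1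

/-- the major index of a standard Young tableau -/
def majT {n d : ℕ} (τ : HookSYT n d) : ℕ := ∑ i ∈ Des τ, i

/-- the number of descents of a standard Young tableau -/
def desT {n d : ℕ} (τ : HookSYT n d) : ℕ := (Des τ).card

/-- the maximum of the descent set -/
def maxDes {n d : ℕ} (τ : HookSYT n d) : ℕ := (Des τ).sup id

/-- the map `M_{n,d}`: the path `γ₁γ₂⋯γₙ` with `γₙ = NE`, `γ_{n-i} = NE` if
`i ∈ Des τ` and `γ_{n-i} = D` otherwise -/
def Mmap (n d : ℕ) (τ : HookSYT n d) : List Step :=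
  (((List.range n).map fun j =>
    if j = n - 1 then [N, E]
    else if (n - 1 - j) ∈ Des τ then [N, E] else [D])).flatten

/-- the map `S_{n,d}`: the path `γ₁⋯γ_{n-1}` with `γ_{n-i} = NNEE` if
`i = max Des τ` and `1 ∈ Des τ`, `γ_{n-i} = NDE` if `i = max Des τ` and
`1 ∉ Des τ`, `γ_{n-i} = NE` if `i = 1` or `i ∈ Des τ ∖ {max Des τ}`, and
`γ_{n-i} = D` otherwise. -/
def Smap (n d : ℕ) (τ : HookSYT n d) : List Step :=
  (((List.range (n-1)).map fun j =>
    if (n - 1 - j) = maxDes τ then (if 1 ∈ Des τ then [N,N,E,E] else [N,D,E])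
    else if (n - 1 - j) = 1 ∨ (n - 1 - j) ∈ Des τ then [N,E] else [D])).flatten

/-- the set `V_{n,d}` of Schröder paths of the form `Dʲ NNEE u` or `Dʲ NDE u`
with `u ∈ {NE,D}* NE`, having `n-d+1` north steps and `d-1` diagonal steps. -/
def Vset (n d : ℕ) : Set (List Step) :=
  {g | (∃ j u, IsNED u ∧
      (g = List.replicate j D ++ [N,N,E,E] ++ (u ++ [N,E]) ∨
       g = List.replicate j D ++ [N,D,E] ++ (u ++ [N,E]))) ∧
     cnt N g = n - d + 1 ∧ cnt D g = d - 1}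

/-- Schröder paths in an `n × n` grid with `dd` diagonal steps, area `a`,
ending with `NE` -/
def SchT (n dd a : ℕ) : Set (List Step) :=
  {g | IsSchroeder g ∧ cnt D g = dd ∧ cnt N g = n - dd ∧ area g = a ∧ ∃ u, g = u ++ [N, E]}

/-- the 'upper' forms: `Dʲ NNEE γ' NE NE` or `γ' NE Dʲ NNEE γ''` -/
def UpperForm (g : List Step) : Prop :=
  (∃ j u, IsNED u ∧ g = List.replicate j D ++ [N,N,E,E] ++ u ++ [N,E,N,E]) ∨
  (∃ u j v, IsNED u ∧ g = u ++ [N,E] ++ List.replicate j D ++ [N,N,E,E] ++ v)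

/-- the 'lower' forms: `Dʲ NNEE γ' D NE` or `γ' NDE Dʲ NE γ''` -/
def LowerForm (g : List Step) : Prop :=
  (∃ j u, IsNED u ∧ g = List.replicate j D ++ [N,N,E,E] ++ u ++ [D,N,E]) ∨
  (∃ u j v, IsNED u ∧ g = u ++ [N,D,E] ++ List.replicate j D ++ [N,E] ++ v)

/-- the number of distinct columns of the path -/
def Tcols (n : ℕ) (g : List Step) : ℕ :=
  ((Finset.range n).image fun i => eBefore g i).card

/-- the `q`-integer `[k]_q = 1 + q + ⋯ + q^{k-1}` as a polynomial -/
noncomputable def qInt (k : ℕ) : Polynomial ℤ := ∑ i ∈ Finset.range k, Polynomial.X ^ i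

/-- the `q`-factorial `[k]!_q` -/
noncomputable def qFact (k : ℕ) : Polynomial ℤ := ∏ i ∈ Finset.range k, qInt (i+1)


section Aux

lemma ned_replicate (j : ℕ) : IsNED (List.replicate j D) := by
  induction j with
  | zero => exact IsNED.nil
  | succ j ih => exact IsNED.d ih

lemma ned_append {a b : List Step} (ha : IsNED a) (hb : IsNED b) : IsNED (a ++ b) := by
  induction ha with
  | nil => simpa
  | ne _ ih => exact IsNED.ne ih
  | d _ ih => exact IsNED.d ih

lemma ned_right (v : List Step) (h : IsNED v) :
    v = [] ∨ (∃ w, IsNED w ∧ v = w ++ [D]) ∨ (∃ w, IsNED w ∧ v = w ++ [N,E]) := by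
  induction h with
  | nil => exact Or.inl rfl
  | ne hw ih =>
    rcases ih with rfl | ⟨w', hw', rfl⟩ | ⟨w', hw', rfl⟩
    · exact Or.inr (Or.inr ⟨[], IsNED.nil, rfl⟩)
    · exact Or.inr (Or.inl ⟨_, IsNED.ne hw', by simp⟩)
    · exact Or.inr (Or.inr ⟨_, IsNED.ne hw', by simp⟩)
  | d hw ih =>
    rcases ih with rfl | ⟨w', hw', rfl⟩ | ⟨w', hw', rfl⟩
    · exact Or.inr (Or.inl ⟨[], IsNED.nil, rfl⟩)
    · exact Or.inr (Or.inl ⟨_, IsNED.d hw', by simp⟩)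
    · exact Or.inr (Or.inr ⟨_, IsNED.d hw', by simp⟩)

lemma ned_front (v : List Step) (h : IsNED v) :
    v = [] ∨ (∃ j, 1 ≤ j ∧ v = List.replicate j D) ∨
      (∃ j v', IsNED v' ∧ v = List.replicate j D ++ [N,E] ++ v') := by
  induction h with
  | @ne w hw _ => exact Or.inr (Or.inr ⟨0, w, hw, rfl⟩)
  | nil => exact Or.inl rfl
  | d hw ih =>
    rcases ih with rfl | ⟨j, hj, rfl⟩ | ⟨j, v', hv', rfl⟩
    · exact Or.inr (Or.inl ⟨1, le_refl 1, rfl⟩)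
    · exact Or.inr (Or.inl ⟨j+1, by omega, rfl⟩)
    · exact Or.inr (Or.inr ⟨j+1, v', hv', rfl⟩)

lemma ned_struct (u : List Step) (h : IsNED u) :
    (∃ j, u = List.replicate j D) ∨
      (∃ u' j, IsNED u' ∧ u = u' ++ [N,E] ++ List.replicate j D) := by
  induction h with
  | nil => exact Or.inl ⟨0, rfl⟩
  | ne hw ih =>
    rcases ih with ⟨j, rfl⟩ | ⟨u', j, hu', rfl⟩
    · exact Or.inr ⟨[], j, IsNED.nil, rfl⟩
    · exact Or.inr ⟨N::E::u', j, IsNED.ne hu', rfl⟩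
  | d hw ih =>
    rcases ih with ⟨j, rfl⟩ | ⟨u', j, hu', rfl⟩
    · exact Or.inl ⟨j+1, rfl⟩
    · exact Or.inr ⟨D::u', j, IsNED.d hu', rfl⟩

lemma schroeder_append_left {b g : List Step} (hb : cnt N b = cnt E b)
    (h : IsSchroeder (b ++ g)) : IsSchroeder g := by
  obtain ⟨h1, h2⟩ := h
  constructor
  · intro p hp
    have := h1 (b ++ p) (by obtain ⟨t, rfl⟩ := hp; exact ⟨t, by simp⟩)
    simp only [cnt, List.count_append] at this hb ⊢
    omega
  · simp only [cnt, List.count_append] at h2 hb ⊢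
    omega

lemma not_schroeder_E {g : List Step} : ¬ IsSchroeder (E :: g) := by
  intro h
  have := h.1 [E] ⟨g, rfl⟩
  simp [cnt] at this

lemma areaAux_succ_zero {h : ℕ} {g : List Step} (ha : areaAux (h+1) g = 0) :
    g = [] ∨ ∃ g', g = E :: g' := by
  match g with
  | [] => exact Or.inl rfl
  | N :: w => simp [areaAux] at ha
  | D :: w => simp [areaAux] at ha
  | E :: w => exact Or.inr ⟨w, rfl⟩

end Aux


lemma area_zero_ned_aux : ∀ k g, g.length ≤ k → IsSchroeder g → area g = 0 → IsNED g := by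
  intro k
  induction k with
  | zero =>
    intro g hg _ _
    rw [List.length_eq_zero_iff.mp (Nat.le_zero.mp hg)]
    exact IsNED.nil
  | succ k ih =>
    intro g hg hs ha
    match g with
    | [] => exact IsNED.nil
    | E :: w => exact absurd hs not_schroeder_E
    | D :: w =>
      have hs' := schroeder_append_left (b := [D]) (by simp [cnt]) hs
      have ha' : area w = 0 := by simpa [area, areaAux] using ha
      exact IsNED.d (ih w (by simp at hg ⊢; omega) hs' ha')
    | N :: w =>
      have h0 : areaAux 1 w = 0 := by simpa [area, areaAux] using ha
      rcases areaAux_succ_zero (h := 0) h0 with rfl | ⟨w', rfl⟩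
      · have := hs.2; simp [cnt] at this
      · have hs' := schroeder_append_left (b := [N,E]) (by simp [cnt]) hs
        have ha' : area w' = 0 := by simpa [area, areaAux] using h0
        exact IsNED.ne (ih w' (by simp at hg ⊢; omega) hs' ha')

lemma area_zero_ned {g : List Step} (hs : IsSchroeder g) (ha : area g = 0) : IsNED g :=
  area_zero_ned_aux g.length g le_rfl hs ha

lemma area_one_decomp_aux : ∀ k g, g.length ≤ k → IsSchroeder g → area g = 1 →
    ∃ u v, IsNED u ∧ IsNED v ∧ (g = u ++ [N,N,E,E] ++ v ∨ g = u ++ [N,D,E] ++ v) := by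
  intro k
  induction k with
  | zero =>
    intro g hg _ ha
    rw [List.length_eq_zero_iff.mp (Nat.le_zero.mp hg)] at ha
    simp [area, areaAux] at ha
  | succ k ih =>
    intro g hg hs ha
    match g with
    | [] => simp [area, areaAux] at ha
    | E :: w => exact absurd hs not_schroeder_E
    | D :: w =>
      have hs' := schroeder_append_left (b := [D]) (by simp [cnt]) hs
      have ha' : area w = 1 := by simpa [area, areaAux] using ha
      obtain ⟨u, v, hu, hv, hc⟩ := ih w (by simp at hg ⊢; omega) hs' ha'
      refine ⟨D::u, v, IsNED.d hu, hv, ?_⟩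
      rcases hc with rfl | rfl
      · exact Or.inl rfl
      · exact Or.inr rfl
    | [N] => have := hs.2; simp [cnt] at this
    | N :: E :: w' =>
      have hs' := schroeder_append_left (b := [N,E]) (by simp [cnt]) hs
      have ha' : area w' = 1 := by simpa [area, areaAux] using ha
      obtain ⟨u, v, hu, hv, hc⟩ := ih w' (by simp at hg ⊢; omega) hs' ha'
      refine ⟨N::E::u, v, IsNED.ne hu, hv, ?_⟩
      rcases hc with rfl | rfl
      · exact Or.inl rfl
      · exact Or.inr rfl
    | N :: N :: w' =>
      have h0 : areaAux 2 w' = 0 := by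
        have : 1 + areaAux 2 w' = 1 := by simpa [area, areaAux] using ha
        omega
      rcases areaAux_succ_zero (h := 1) h0 with rfl | ⟨w'', rfl⟩
      · have := hs.2; simp [cnt] at this
      · have h1 : areaAux 1 w'' = 0 := by simpa [areaAux] using h0
        rcases areaAux_succ_zero (h := 0) h1 with rfl | ⟨g', rfl⟩
        · have := hs.2; simp [cnt] at this
        · have hs' := schroeder_append_left (b := [N,N,E,E]) (by simp [cnt]) hs
          have ha' : area g' = 0 := by simpa [area, areaAux] using h1
          exact ⟨[], g', IsNED.nil, area_zero_ned hs' ha', Or.inl rfl⟩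
    | N :: D :: w' =>
      have h0 : areaAux 1 w' = 0 := by
        have : 1 + areaAux 1 w' = 1 := by simpa [area, areaAux] using ha
        omega
      rcases areaAux_succ_zero (h := 0) h0 with rfl | ⟨g', rfl⟩
      · have := hs.2; simp [cnt] at this
      · have hs' := schroeder_append_left (b := [N,D,E]) (by simp [cnt]) hs
        have ha' : area g' = 0 := by simpa [area, areaAux] using h0
        exact ⟨[], g', IsNED.nil, area_zero_ned hs' ha', Or.inr rfl⟩

lemma area_one_decomp {g : List Step} (hs : IsSchroeder g) (ha : area g = 1) :
    ∃ u v, IsNED u ∧ IsNED v ∧ (g = u ++ [N,N,E,E] ++ v ∨ g = u ++ [N,D,E] ++ v) :=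
  area_one_decomp_aux g.length g le_rfl hs ha


lemma uniq_decomp (B1 B2 : List Step)
    (hB1 : B1 = [N,N,E,E] ∨ B1 = [N,D,E]) (hB2 : B2 = [N,N,E,E] ∨ B2 = [N,D,E]) :
    ∀ u1, IsNED u1 → ∀ u2, IsNED u2 → ∀ v1 v2,
      u1 ++ B1 ++ v1 = u2 ++ B2 ++ v2 → u1 = u2 ∧ B1 = B2 ∧ v1 = v2 := by
  intro u1 h1
  induction h1 with
  | nil =>
    intro u2 h2 v1 v2 heq
    cases h2 with
    | nil =>
      rcases hB1 with rfl | rfl <;> rcases hB2 with rfl | rfl <;>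
        simp_all
    | ne hw =>
      rcases hB1 with rfl | rfl <;> simp_all
    | d hw =>
      rcases hB1 with rfl | rfl <;> simp_all
  | @ne w hw ih =>
    intro u2 h2 v1 v2 heq
    cases h2 with
    | nil =>
      rcases hB2 with rfl | rfl <;> simp_all
    | @ne w2 hw2 =>
      have heq' : w ++ B1 ++ v1 = w2 ++ B2 ++ v2 := by simpa using heq
      obtain ⟨h, hB, hv⟩ := ih w2 hw2 v1 v2 heq'
      exact ⟨by rw [h], hB, hv⟩
    | d hw2 =>
      simp_all
  | @d w hw ih =>
    intro u2 h2 v1 v2 heq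
    cases h2 with
    | nil =>
      rcases hB2 with rfl | rfl <;> simp_all
    | ne hw2 =>
      simp_all
    | @d w2 hw2 =>
      have heq' : w ++ B1 ++ v1 = w2 ++ B2 ++ v2 := by simpa using heq
      obtain ⟨h, hB, hv⟩ := ih w2 hw2 v1 v2 heq'
      exact ⟨by rw [h], hB, hv⟩

lemma upper_lower_disj {g : List Step} (hU : UpperForm g) (hL : LowerForm g) : False := by
  rcases hU with ⟨j, u, hu, rfl⟩ | ⟨u, j, v, hu, rfl⟩ <;>
    rcases hL with ⟨j', u', hu', heq⟩ | ⟨u', j', v', hu', heq⟩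
  · -- U1 vs L1
    have heq' : List.replicate j D ++ [N,N,E,E] ++ (u ++ [N,E,N,E]) =
        List.replicate j' D ++ [N,N,E,E] ++ (u' ++ [D,N,E]) := by
      simpa [List.append_assoc] using heq
    obtain ⟨-, -, hv⟩ := uniq_decomp _ _ (Or.inl rfl) (Or.inl rfl) _
      (ned_replicate j) _ (ned_replicate j') _ _ heq'
    have := congrArg List.reverse hv
    simp at this
  · -- U1 vs L2
    have heq' : List.replicate j D ++ [N,N,E,E] ++ (u ++ [N,E,N,E]) =
        u' ++ [N,D,E] ++ (List.replicate j' D ++ [N,E] ++ v') := by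
      simpa [List.append_assoc] using heq
    obtain ⟨-, hB, -⟩ := uniq_decomp _ _ (Or.inl rfl) (Or.inr rfl) _
      (ned_replicate j) _ hu' _ _ heq'
    simp at hB
  · -- U2 vs L1
    have heq' : (u ++ [N,E] ++ List.replicate j D) ++ [N,N,E,E] ++ v =
        List.replicate j' D ++ [N,N,E,E] ++ (u' ++ [D,N,E]) := by
      simpa [List.append_assoc] using heq
    obtain ⟨hu12, -, -⟩ := uniq_decomp _ _ (Or.inl rfl) (Or.inl rfl) _
      (ned_append (ned_append hu (IsNED.ne IsNED.nil)) (ned_replicate j))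
      _ (ned_replicate j') _ _ heq'
    have := congrArg (List.count N) hu12
    simp [List.count_append, List.count_replicate] at this
  · -- U2 vs L2
    have heq' : (u ++ [N,E] ++ List.replicate j D) ++ [N,N,E,E] ++ v =
        u' ++ [N,D,E] ++ (List.replicate j' D ++ [N,E] ++ v') := by
      simpa [List.append_assoc] using heq
    obtain ⟨-, hB, -⟩ := uniq_decomp _ _ (Or.inl rfl) (Or.inr rfl) _
      (ned_append (ned_append hu (IsNED.ne IsNED.nil)) (ned_replicate j))
      _ hu' _ _ heq'
    simp at hB

/-- For `1 ≤ d ≤ n-4`, every Schröder path in an `n×n` grid with `d`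
diagonal steps, area `1`, ending in `NE`, belongs to exactly one of the 'upper' and
'lower' sets of forms. -/
theorem stmt19 (n d : ℕ) (hd1 : 1 ≤ d) (hd2 : d ≤ n - 4) :
    ∀ g : List Step, IsSchroeder g → cnt D g = d → cnt N g = n - d → area g = 1 →
      (∃ u, g = u ++ [N, E]) →
      Xor' (UpperForm g) (LowerForm g) := by
  intro g hs hD hN ha hend
  obtain ⟨u, v, hu, hv, hc⟩ := area_one_decomp hs ha
  obtain ⟨u0, hu0⟩ := hend
  have main : UpperForm g ∨ LowerForm g := by
    rcases hc with rfl | rfl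
    · -- NNEE factor
      rcases ned_struct u hu with ⟨j, rfl⟩ | ⟨u', j, hu', rfl⟩
      · rcases ned_right v hv with rfl | ⟨w, hw, rfl⟩ | ⟨w, hw, rfl⟩
        · exfalso
          have := congrArg List.reverse hu0
          simp at this
        · exfalso
          have := congrArg List.reverse hu0
          simp at this
        · rcases ned_right w hw with rfl | ⟨w', hw', rfl⟩ | ⟨w', hw', rfl⟩
          · exfalso
            simp [cnt, List.count_append, List.count_replicate] at hN
            omega
          · exact Or.inr (Or.inl ⟨j, w', hw', by simp⟩)
          · exact Or.inl (Or.inl ⟨j, w', hw', by simp⟩)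
      · exact Or.inl (Or.inr ⟨u', j, v, hu', by simp⟩)
    · -- NDE factor
      rcases ned_front v hv with rfl | ⟨j, hj, rfl⟩ | ⟨j, v', hv', rfl⟩
      · exfalso
        have := congrArg List.reverse hu0
        simp at this
      · exfalso
        obtain ⟨j', rfl⟩ : ∃ j', j = j' + 1 := ⟨j - 1, by omega⟩
        rw [List.replicate_succ'] at hu0
        have := congrArg List.reverse hu0
        simp at this
      · exact Or.inr (Or.inr ⟨u, j, v', hu, by simp⟩)
  rcases main with hU | hL
  · exact Or.inl ⟨hU, fun hL => upper_lower_disj hU hL⟩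
  · exact Or.inr ⟨hL, fun hU => upper_lower_disj hU hL⟩
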